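/- Let G be a group and V a subgroup. If φ is an extreme point of the convex set P_V(G) = {φ positive definite : φ(1) = 1 and φ(v) = 1 for all v ∈ V}, then φ is an extreme point of P₁(G) = {φ positive definite : φ(1) = 1}. -/

import Mathlib

open ComplexOrder

/-- A function `φ : G → ℂ` is positive definite if all the matrices `(φ (xⱼ⁻¹ * xᵢ))` are
positive semidefinite (here expressed via the order on `ℂ`: the sums are nonnegative reals). -/
def IsPositiveDefinite {G : Type*} [Group G] (φ : G → ℂ) : Prop :=
  ∀ (n : ℕ) (x : Fin n → G) (c : Fin n → ℂ),
    0 ≤ ∑ i, ∑ j, φ ((x j)⁻¹ * x i) * c i * (starRingEnd ℂ) (c j)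

lemma ipd_herm {G : Type*} [Group G] {φ : G → ℂ} (h : IsPositiveDefinite φ) (g : G) :
    φ g⁻¹ = (starRingEnd ℂ) (φ g) := by
  have h0 := h 1 ![1] ![1]
  have h1 := h 2 ![1, g] ![1, 1]
  have h2 := h 2 ![1, g] ![1, Complex.I]
  simp [Fin.sum_univ_two, Fin.sum_univ_one] at h0 h1 h2
  rw [Complex.le_def] at h0 h1 h2
  simp only [Complex.zero_re, Complex.zero_im, Complex.add_re, Complex.add_im, Complex.neg_re,
    Complex.neg_im, Complex.mul_re, Complex.mul_im, Complex.I_re, Complex.I_im] at h0 h1 h2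
  refine Complex.ext ?_ ?_
  · simp only [Complex.conj_re]
    linarith [h0.2, h2.2]
  · simp only [Complex.conj_im]
    linarith [h0.2, h1.2]

lemma ipd_abs_le {G : Type*} [Group G] {φ : G → ℂ} (h : IsPositiveDefinite φ)
    (h1 : φ 1 = 1) (g : G) : ‖φ g‖ ≤ 1 := by
  set A := φ g with hA
  set r : ℝ := ‖A‖ with hr
  have hherm := ipd_herm h g
  have h2 := h 2 ![1, g] ![(r : ℂ), -(starRingEnd ℂ) A]
  simp [Fin.sum_univ_two, h1, hherm] at h2
  have hmc : A * (starRingEnd ℂ) A = ((r^2 : ℝ) : ℂ) := by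
    rw [Complex.mul_conj]
    norm_cast
    rw [hr, Complex.sq_norm]
  push_cast at hmc
  have hclean : (↑r * ↑r + -((starRingEnd ℂ) (φ g) * ↑r * A) + (-(φ g * (starRingEnd ℂ) A * ↑r) + (starRingEnd ℂ) A * A)) = ((2*r^2 - 2*r^3 : ℝ) : ℂ) := by
    push_cast
    linear_combination (1 - 2*(r:ℂ)) * hmc
  rw [hclean] at h2
  rw [Complex.zero_le_real] at h2
  have hrnn : 0 ≤ r := norm_nonneg A
  by_contra hc
  push_neg at hc
  have h3 : r^2*(1-r) < 0 := mul_neg_of_pos_of_neg (by nlinarith) (by linarith)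
  nlinarith [h3]

/-- An extreme point of the set of normalized positive definite functions which are `1` on a
subgroup `V` is an extreme point of the set of all normalized positive definite functions. -/
theorem extremePoint_PV_extremePoint_P1 {G : Type*} [Group G] (V : Subgroup G) (φ : G → ℂ)
    (hφ : φ ∈ Set.extremePoints ℝ
      {ψ : G → ℂ | IsPositiveDefinite ψ ∧ ψ 1 = 1 ∧ ∀ v ∈ V, ψ v = 1}) :
    φ ∈ Set.extremePoints ℝ {ψ : G → ℂ | IsPositiveDefinite ψ ∧ ψ 1 = 1} := by
  rw [mem_extremePoints] at hφ ⊢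
  obtain ⟨⟨hpd, hone, hV⟩, hext⟩ := hφ
  refine ⟨⟨hpd, hone⟩, ?_⟩
  intro ψ₁ hψ₁ ψ₂ hψ₂ hseg
  obtain ⟨a, b, ha, hb, hab, heq⟩ := hseg
  have key : ∀ v ∈ V, ψ₁ v = 1 ∧ ψ₂ v = 1 := by
    intro v hv
    have hφv : φ v = 1 := hV v hv
    have heqv : (a : ℂ) * ψ₁ v + (b : ℂ) * ψ₂ v = 1 := by
      have := congrFun heq v
      simpa [Complex.real_smul, hφv] using this
    have hb1 : ‖ψ₁ v‖ ≤ 1 := ipd_abs_le hψ₁.1 hψ₁.2 v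
    have hb2 : ‖ψ₂ v‖ ≤ 1 := ipd_abs_le hψ₂.1 hψ₂.2 v
    have hre1 : (ψ₁ v).re ≤ 1 := le_trans (Complex.re_le_norm _) hb1
    have hre2 : (ψ₂ v).re ≤ 1 := le_trans (Complex.re_le_norm _) hb2
    have hre : a * (ψ₁ v).re + b * (ψ₂ v).re = 1 := by
      have := congrArg Complex.re heqv
      simpa using this
    have him : a * (ψ₁ v).im + b * (ψ₂ v).im = 0 := by
      have := congrArg Complex.im heqv
      simpa using this
    have he1 : (ψ₁ v).re = 1 := by nlinarith
    have he2 : (ψ₂ v).re = 1 := by nlinarith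
    have hsq1 : (ψ₁ v).re ^ 2 + (ψ₁ v).im ^ 2 ≤ 1 := by
      have := Complex.sq_norm (ψ₁ v)
      rw [Complex.normSq_apply] at this
      nlinarith [norm_nonneg (ψ₁ v)]
    have hsq2 : (ψ₂ v).re ^ 2 + (ψ₂ v).im ^ 2 ≤ 1 := by
      have := Complex.sq_norm (ψ₂ v)
      rw [Complex.normSq_apply] at this
      nlinarith [norm_nonneg (ψ₂ v)]
    constructor <;> apply Complex.ext <;> simp [he1, he2] <;> nlinarith
  have hext' := hext ψ₁ ⟨hψ₁.1, hψ₁.2, fun v hv => (key v hv).1⟩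
    ψ₂ ⟨hψ₂.1, hψ₂.2, fun v hv => (key v hv).2⟩ ⟨a, b, ha, hb, hab, heq⟩
  exact hext'
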